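/- Define 𝒫^D₂(λ) = ⌊G_λ(0)+1/4⌋ + 2·Σ_{m=1}^{⌊λ⌋} ⌊G_λ(m)+1/4⌋. Then 𝒫^D₂(λ) < λ²/4 for all λ > 0. -/

import Mathlib

open Real Set MeasureTheory

noncomputable def G (l z : ℝ) : ℝ :=
  (1 / Real.pi) * (Real.sqrt (l ^ 2 - z ^ 2) - z * Real.arccos (z / l))

/-- the planar Dirichlet lattice count `𝒫^D₂(λ)` -/
noncomputable def PD2 (l : ℝ) : ℤ :=
  ⌊G l 0 + 1 / 4⌋ + 2 * ∑ m ∈ Finset.Icc 1 ⌊l⌋₊, ⌊G l (m : ℝ) + 1 / 4⌋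

noncomputable def xinv (l s : ℝ) : ℝ := Function.invFunOn (G l) (Set.Icc (-l) l) s


lemma G_continuous (l : ℝ) : Continuous (G l) := by
  unfold G
  exact continuous_const.mul (((continuous_const.sub (continuous_pow 2)).sqrt).sub (continuous_id.mul (Real.continuous_arccos.comp (continuous_id.div_const l))))

lemma sqrt_one_sub_sq (l z : ℝ) (hl : 0 < l) :
    Real.sqrt (1 - (z / l) ^ 2) = Real.sqrt (l ^ 2 - z ^ 2) / l := by
  rw [show (1 : ℝ) - (z/l)^2 = (l^2 - z^2) / l^2 by field_simp]
  rw [Real.sqrt_div' _ (by positivity), Real.sqrt_sq hl.le]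

lemma G_hasDerivAt (l z : ℝ) (hl : 0 < l) (h1 : -l < z) (h2 : z < l) :
    HasDerivAt (G l) (-(Real.arccos (z / l)) / Real.pi) z := by
  have hz2 : l ^ 2 - z ^ 2 > 0 := by nlinarith
  have hsq : Real.sqrt (l ^ 2 - z ^ 2) > 0 := Real.sqrt_pos.mpr hz2
  have hne1 : z / l ≠ -1 := by
    intro h; rw [div_eq_iff hl.ne'] at h; nlinarith
  have hne2 : z / l ≠ 1 := by
    intro h; rw [div_eq_iff hl.ne'] at h; nlinarith
  have hd1 : HasDerivAt (fun z : ℝ => l ^ 2 - z ^ 2) (-(2 * z)) z := by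
    simpa using ((hasDerivAt_pow 2 z).const_sub (l ^ 2))
  have hd2 : HasDerivAt (fun z : ℝ => Real.sqrt (l ^ 2 - z ^ 2))
      (-(2 * z) / (2 * Real.sqrt (l ^ 2 - z ^ 2))) z := hd1.sqrt hz2.ne'
  have hd3 : HasDerivAt (fun z : ℝ => Real.arccos (z / l))
      (-(1 / Real.sqrt (1 - (z / l) ^ 2)) * (1 / l)) z := by
    have := (Real.hasDerivAt_arccos hne1 hne2).comp z ((hasDerivAt_id z).div_const l)
    exact this
  have hd4 : HasDerivAt (fun z : ℝ => z * Real.arccos (z / l))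
      (1 * Real.arccos (z / l) + z * (-(1 / Real.sqrt (1 - (z / l) ^ 2)) * (1 / l))) z :=
    (hasDerivAt_id z).mul hd3
  have hd5 := (hd2.sub hd4).const_mul (1 / Real.pi)
  refine hd5.congr_deriv ?_
  symm
  rw [sqrt_one_sub_sq l z hl]
  have hpi := Real.pi_ne_zero
  field_simp
  ring

lemma G_at_l (l : ℝ) (hl : 0 < l) : G l l = 0 := by
  unfold G
  rw [div_self hl.ne', Real.arccos_one]
  simp

lemma G_at_neg_l (l : ℝ) (hl : 0 < l) : G l (-l) = l := by
  unfold G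
  rw [neg_div, div_self hl.ne', Real.arccos_neg_one]
  have : l ^ 2 - (-l) ^ 2 = 0 := by ring
  rw [this]
  field_simp
  simp

lemma G_at_zero (l : ℝ) (hl : 0 < l) : G l 0 = l / Real.pi := by
  unfold G
  rw [zero_div, Real.arccos_zero, show l ^ 2 - 0 ^ 2 = l ^ 2 by ring, Real.sqrt_sq hl.le]
  field_simp
  ring

lemma G_strictAntiOn (l : ℝ) (hl : 0 < l) : StrictAntiOn (G l) (Icc (-l) l) := by
  apply strictAntiOn_of_deriv_neg (convex_Icc _ _) ((G_continuous l).continuousOn)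
  intro z hz
  rw [interior_Icc] at hz
  rw [(G_hasDerivAt l z hl hz.1 hz.2).deriv]
  have h1 : 0 < Real.arccos (z / l) := Real.arccos_pos.mpr (by
    rw [div_lt_one hl]; exact hz.2)
  have := Real.pi_pos
  exact div_neg_of_neg_of_pos (neg_neg_iff_pos.mpr h1) this

lemma arccos_anti {x y : ℝ} (h : x ≤ y) : Real.arccos y ≤ Real.arccos x := by
  rw [Real.arccos_eq_pi_div_two_sub_arcsin, Real.arccos_eq_pi_div_two_sub_arcsin]
  have := Real.monotone_arcsin h
  linarith

lemma hasDerivAt_h (l c z : ℝ) (hl : 0 < l) (h1 : -l < z) (h2 : z < l) :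
    HasDerivAt (fun u => G l u + c * u) (-(Real.arccos (z / l)) / Real.pi + c) z := by
  have := (G_hasDerivAt l z hl h1 h2).add ((hasDerivAt_id z).const_mul c)
  rw [mul_one] at this
  exact this

/-- Tangent line bound: G is convex on [-l, l]. -/
lemma G_tangent (l v : ℝ) (hl : 0 < l) (hv : v ∈ Icc (-l) l) :
    ∀ u ∈ Icc (-l) l, G l v - Real.arccos (v / l) / Real.pi * (u - v) ≤ G l u := by
  set c := Real.arccos (v / l) / Real.pi with hc
  have hpi := Real.pi_pos
  set h : ℝ → ℝ := fun u => G l u + c * u with hh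
  have hcont : Continuous h := (G_continuous l).add (continuous_const.mul continuous_id)
  have key : ∀ u ∈ Icc (-l) l, h v ≤ h u := by
    intro u hu
    rcases le_total v u with huv | huv
    · have hmono : MonotoneOn h (Icc v l) := by
        apply monotoneOn_of_deriv_nonneg (convex_Icc _ _) hcont.continuousOn
        · intro x hx
          rw [interior_Icc] at hx
          exact (hasDerivAt_h l c x hl (lt_of_le_of_lt hv.1 hx.1) hx.2).differentiableAt.differentiableWithinAt
        · intro x hx
          rw [interior_Icc] at hx
          rw [(hasDerivAt_h l c x hl (lt_of_le_of_lt hv.1 hx.1) hx.2).deriv, hc]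
          have harc : Real.arccos (x / l) ≤ Real.arccos (v / l) :=
            arccos_anti ((div_le_div_iff_of_pos_right hl).mpr hx.1.le)
          have heq : -(Real.arccos (x / l)) / Real.pi + Real.arccos (v / l) / Real.pi
              = (Real.arccos (v / l) - Real.arccos (x / l)) / Real.pi := by ring
          rw [heq]
          exact div_nonneg (by linarith) hpi.le
      exact hmono (left_mem_Icc.mpr (le_trans huv hu.2)) ⟨huv, hu.2⟩ huv
    · have hanti : AntitoneOn h (Icc (-l) v) := by
        apply antitoneOn_of_deriv_nonpos (convex_Icc _ _) hcont.continuousOn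
        · intro x hx
          rw [interior_Icc] at hx
          exact (hasDerivAt_h l c x hl hx.1 (lt_of_lt_of_le hx.2 hv.2)).differentiableAt.differentiableWithinAt
        · intro x hx
          rw [interior_Icc] at hx
          rw [(hasDerivAt_h l c x hl hx.1 (lt_of_lt_of_le hx.2 hv.2)).deriv, hc]
          have harc : Real.arccos (v / l) ≤ Real.arccos (x / l) :=
            arccos_anti ((div_le_div_iff_of_pos_right hl).mpr hx.2.le)
          have heq : -(Real.arccos (x / l)) / Real.pi + Real.arccos (v / l) / Real.pi
              = (Real.arccos (v / l) - Real.arccos (x / l)) / Real.pi := by ring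
          rw [heq]
          exact div_nonpos_of_nonpos_of_nonneg (by linarith) hpi.le
      exact hanti ⟨hu.1, huv⟩ (right_mem_Icc.mpr (le_trans hu.1 huv)) huv
  intro u hu
  have := key u hu
  simp only [hh] at this
  nlinarith [this]


lemma xinv_exists (l s : ℝ) (hl : 0 < l) (hs : s ∈ Icc 0 l) :
    ∃ u ∈ Icc (-l) l, G l u = s := by
  have h := intermediate_value_Icc' (by linarith : -l ≤ l) (G_continuous l).continuousOn
  rw [G_at_l l hl, G_at_neg_l l hl] at h
  obtain ⟨u, hu, hGu⟩ := h hs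
  exact ⟨u, hu, hGu⟩

lemma xinv_mem (l s : ℝ) (hl : 0 < l) (hs : s ∈ Icc 0 l) : xinv l s ∈ Icc (-l) l :=
  Function.invFunOn_mem (xinv_exists l s hl hs)

lemma G_xinv (l s : ℝ) (hl : 0 < l) (hs : s ∈ Icc 0 l) : G l (xinv l s) = s :=
  Function.invFunOn_eq (xinv_exists l s hl hs)

lemma xinv_antitoneOn (l : ℝ) (hl : 0 < l) : AntitoneOn (xinv l) (Icc 0 l) := by
  intro s hs t ht hst
  by_contra hcon
  push_neg at hcon
  have := G_strictAntiOn l hl (xinv_mem l s hl hs) (xinv_mem l t hl ht) hcon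
  rw [G_xinv l s hl hs, G_xinv l t hl ht] at this
  linarith

lemma xinv_nonneg (l s : ℝ) (hl : 0 < l) (hs : s ∈ Icc 0 l) (hsl : s ≤ G l 0) :
    0 ≤ xinv l s := by
  by_contra hcon
  push_neg at hcon
  have h0 : (0:ℝ) ∈ Icc (-l) l := by constructor <;> linarith
  have := G_strictAntiOn l hl (xinv_mem l s hl hs) h0 hcon
  rw [G_xinv l s hl hs] at this
  linarith

lemma xinv_lt_l (l s : ℝ) (hl : 0 < l) (hs : s ∈ Icc 0 l) (hs0 : 0 < s) :
    xinv l s < l := by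
  rcases lt_or_eq_of_le (xinv_mem l s hl hs).2 with h | h
  · exact h
  · exfalso
    have := G_xinv l s hl hs
    rw [h, G_at_l l hl] at this
    linarith

noncomputable def Gprim (l u : ℝ) : ℝ :=
  (1 / Real.pi) * (3 / 4 * (u * Real.sqrt (l ^ 2 - u ^ 2)) + l ^ 2 / 4 * Real.arcsin (u / l)
    - u ^ 2 / 2 * Real.arccos (u / l))

lemma sqrt_one_sub_sq' (l z : ℝ) (hl : 0 < l) :
    Real.sqrt (1 - (z / l) ^ 2) = Real.sqrt (l ^ 2 - z ^ 2) / l := by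
  rw [show (1 : ℝ) - (z/l)^2 = (l^2 - z^2) / l^2 by field_simp]
  rw [Real.sqrt_div' _ (by positivity), Real.sqrt_sq hl.le]

lemma Gprim_hasDerivAt (l z : ℝ) (hl : 0 < l) (h1 : -l < z) (h2 : z < l) :
    HasDerivAt (Gprim l) (G l z) z := by
  have hz2 : l ^ 2 - z ^ 2 > 0 := by nlinarith
  have hsq : Real.sqrt (l ^ 2 - z ^ 2) > 0 := Real.sqrt_pos.mpr hz2
  have hne1 : z / l ≠ -1 := by intro h; rw [div_eq_iff hl.ne'] at h; nlinarith
  have hne2 : z / l ≠ 1 := by intro h; rw [div_eq_iff hl.ne'] at h; nlinarith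
  have hdsqrt : HasDerivAt (fun z : ℝ => Real.sqrt (l ^ 2 - z ^ 2))
      (-(2 * z) / (2 * Real.sqrt (l ^ 2 - z ^ 2))) z := by
    have hd1 : HasDerivAt (fun z : ℝ => l ^ 2 - z ^ 2) (-(2 * z)) z := by
      simpa using ((hasDerivAt_pow 2 z).const_sub (l ^ 2))
    exact hd1.sqrt hz2.ne'
  have hd1 : HasDerivAt (fun u : ℝ => u * Real.sqrt (l ^ 2 - u ^ 2))
      (1 * Real.sqrt (l ^ 2 - z ^ 2) + z * (-(2 * z) / (2 * Real.sqrt (l ^ 2 - z ^ 2)))) z :=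
    (hasDerivAt_id z).mul hdsqrt
  have hdarcsin : HasDerivAt (fun u : ℝ => Real.arcsin (u / l))
      (1 / Real.sqrt (1 - (z / l) ^ 2) * (1 / l)) z := by
    have := (Real.hasDerivAt_arcsin hne1 hne2).comp z ((hasDerivAt_id z).div_const l)
    exact this
  have hdarccos : HasDerivAt (fun u : ℝ => Real.arccos (u / l))
      (-(1 / Real.sqrt (1 - (z / l) ^ 2)) * (1 / l)) z := by
    have := (Real.hasDerivAt_arccos hne1 hne2).comp z ((hasDerivAt_id z).div_const l)
    exact this
  have hd3 : HasDerivAt (fun u : ℝ => u ^ 2 / 2 * Real.arccos (u / l))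
      ((2 * z / 2) * Real.arccos (z / l)
        + z ^ 2 / 2 * (-(1 / Real.sqrt (1 - (z / l) ^ 2)) * (1 / l))) z := by
    have hp : HasDerivAt (fun u : ℝ => u ^ 2 / 2) (2 * z / 2) z := by
      simpa using (hasDerivAt_pow 2 z).div_const 2
    exact hp.mul hdarccos
  have hd := (((hd1.const_mul (3/4 : ℝ)).add (hdarcsin.const_mul (l ^ 2 / 4))).sub hd3).const_mul
    (1 / Real.pi)
  have harr : Gprim l = fun u => 1 / Real.pi * (3 / 4 * (u * Real.sqrt (l ^ 2 - u ^ 2))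
      + l ^ 2 / 4 * Real.arcsin (u / l) - u ^ 2 / 2 * Real.arccos (u / l)) := rfl
  rw [harr]
  refine hd.congr_deriv ?_
  symm
  rw [sqrt_one_sub_sq' l z hl]
  unfold G
  have h4 : Real.sqrt (l ^ 2 - z ^ 2) * Real.sqrt (l ^ 2 - z ^ 2) = l ^ 2 - z ^ 2 :=
    Real.mul_self_sqrt hz2.le
  have hpi := Real.pi_ne_zero
  field_simp
  ring_nf
  linear_combination 2 * h4

lemma Gprim_continuous (l : ℝ) : Continuous (Gprim l) := by
  unfold Gprim
  exact continuous_const.mul (((continuous_const.mul (continuous_id.mul ((continuous_const.sub (continuous_pow 2)).sqrt))).add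
    (continuous_const.mul ((Real.continuous_arcsin.comp (continuous_id.div_const l))))).sub
    (((continuous_pow 2).div_const 2).mul (Real.continuous_arccos.comp (continuous_id.div_const l))))

lemma integral_G (l : ℝ) (hl : 0 < l) : ∫ u in (0:ℝ)..l, G l u = l ^ 2 / 8 := by
  have h := intervalIntegral.integral_eq_sub_of_hasDeriv_right_of_le hl.le
    ((Gprim_continuous l).continuousOn)
    (fun z hz => (Gprim_hasDerivAt l z hl (by linarith [hz.1] : -l < z) hz.2).hasDerivWithinAt)
    ((G_continuous l).intervalIntegrable 0 l)
  rw [h]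
  unfold Gprim
  rw [div_self hl.ne', zero_div]
  simp [Real.arcsin_one, Real.arccos_one, Real.arcsin_zero, Real.arccos_zero]
  field_simp
  ring

lemma G_nonneg (l : ℝ) (hl : 0 < l) : ∀ u ∈ Icc (-l) l, 0 ≤ G l u := by
  intro u hu
  rcases eq_or_lt_of_le hu.2 with h | h
  · rw [h, G_at_l l hl]
  · have := G_strictAntiOn l hl hu (right_mem_Icc.mpr (by linarith [hu.1])) h
    rw [G_at_l l hl] at this
    linarith

lemma integral_xinv_le (l Kr : ℝ) (hl : 0 < l) (h0 : 0 ≤ Kr) (hK : Kr ≤ l) :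
    ∫ s in (0:ℝ)..Kr, max (xinv l s) 0 ≤ l ^ 2 / 8 := by
  set xp : ℝ → ℝ := fun s => max (xinv l s) 0 with hxp
  have hIccKl : Icc (0:ℝ) Kr ⊆ Icc 0 l := Icc_subset_Icc le_rfl hK
  have hanti : AntitoneOn xp (Icc 0 Kr) := by
    intro a ha b hb hab
    exact max_le_max ((xinv_antitoneOn l hl) (hIccKl ha) (hIccKl hb) hab) le_rfl
  have hint : IntervalIntegrable xp volume 0 Kr := by
    apply AntitoneOn.intervalIntegrable
    rwa [uIcc_of_le h0]
  have hIoc : IntegrableOn xp (Ioc 0 Kr) volume := hint.1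
  -- pass to lintegral
  have hxpnn : ∀ s, 0 ≤ xp s := fun s => le_max_right _ _
  have h1 : ENNReal.ofReal (∫ s in Ioc 0 Kr, xp s) = ∫⁻ s in Ioc 0 Kr, ENNReal.ofReal (xp s) :=
    MeasureTheory.ofReal_integral_eq_lintegral_ofReal hIoc
      (Filter.Eventually.of_forall hxpnn)
  have hGmeas : ∀ s : ℝ, MeasurableSet {u : ℝ | s < G l u} :=
    fun s => measurableSet_lt measurable_const (G_continuous l).measurable
  have h2 : ∫⁻ s in Ioc 0 Kr, ENNReal.ofReal (xp s)
      ≤ ∫⁻ s in Ioc 0 Kr, volume ({u : ℝ | s < G l u} ∩ Ioc 0 l) := by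
    apply lintegral_mono_ae
    rw [ae_restrict_iff' measurableSet_Ioc]
    apply Filter.Eventually.of_forall
    intro s hs
    rcases le_or_gt (xinv l s) 0 with hneg | hpos
    · have : xp s = 0 := max_eq_right hneg
      rw [this]
      simp
    · have hsIcc : s ∈ Icc 0 l := ⟨hs.1.le, le_trans hs.2 hK⟩
      have hxmem := xinv_mem l s hl hsIcc
      have hsub : Ioo 0 (xinv l s) ⊆ {u : ℝ | s < G l u} ∩ Ioc 0 l := by
        intro u hu
        constructor
        · have := G_strictAntiOn l hl ⟨by linarith [hu.1], le_trans hu.2.le hxmem.2⟩ hxmem hu.2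
          rw [G_xinv l s hl hsIcc] at this
          exact this
        · exact ⟨hu.1, le_trans hu.2.le hxmem.2⟩
      calc ENNReal.ofReal (xp s) = ENNReal.ofReal (xinv l s) := by
            rw [hxp]; simp [max_eq_left hpos.le]
        _ = volume (Ioo 0 (xinv l s)) := by rw [Real.volume_Ioo]; simp
        _ ≤ _ := measure_mono hsub
  have h3 : ∫⁻ s in Ioc 0 Kr, volume ({u : ℝ | s < G l u} ∩ Ioc 0 l)
      ≤ ∫⁻ s in Ioi 0, volume ({u : ℝ | s < G l u} ∩ Ioc 0 l) :=
    lintegral_mono_set Ioc_subset_Ioi_self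
  have h4 : ∫⁻ s in Ioi 0, volume ({u : ℝ | s < G l u} ∩ Ioc 0 l)
      = ∫⁻ u in Ioc 0 l, ENNReal.ofReal (G l u) := by
    rw [MeasureTheory.lintegral_eq_lintegral_meas_lt (volume.restrict (Ioc 0 l))
      (by
        filter_upwards [ae_restrict_mem measurableSet_Ioc] with u hu
        exact G_nonneg l hl u ⟨by linarith [hu.1], hu.2⟩)
      ((G_continuous l).measurable.aemeasurable)]
    apply lintegral_congr
    intro s
    rw [Measure.restrict_apply (hGmeas s)]
  have h5 : ∫⁻ u in Ioc 0 l, ENNReal.ofReal (G l u)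
      = ENNReal.ofReal (∫ u in Ioc 0 l, G l u) := by
    rw [MeasureTheory.ofReal_integral_eq_lintegral_ofReal
      (((G_continuous l).intervalIntegrable 0 l).1)
      (by
        filter_upwards [ae_restrict_mem measurableSet_Ioc] with u hu
        exact G_nonneg l hl u ⟨by linarith [hu.1], hu.2⟩)]
  have h6 : ∫ u in Ioc 0 l, G l u = l ^ 2 / 8 := by
    rw [← intervalIntegral.integral_of_le hl.le, integral_G l hl]
  rw [intervalIntegral.integral_of_le h0]
  have := le_trans (le_trans h2 h3) (le_of_eq (h4.trans (h5.trans (by rw [h6]))))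
  rw [← h1] at this
  rw [← ENNReal.ofReal_le_ofReal_iff (by positivity)]
  exact this

lemma arcsin_ge_self {y : ℝ} (h0 : 0 ≤ y) (h1 : y ≤ 1) : y ≤ Real.arcsin y := by
  have h2 : Real.sin (Real.arcsin y) = y := Real.sin_arcsin (by linarith) h1
  have h3 : 0 ≤ Real.arcsin y := Real.arcsin_nonneg.mpr h0
  calc y = Real.sin (Real.arcsin y) := h2.symm
    _ ≤ Real.arcsin y := Real.sin_le h3

lemma arccos_le_lin {y : ℝ} (h0 : 0 ≤ y) (h1 : y ≤ 1) :
    Real.arccos y ≤ Real.pi / 2 - y := by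
  rw [Real.arccos_eq_pi_div_two_sub_arcsin]
  have := arcsin_ge_self h0 h1
  linarith

lemma interval_bound (l : ℝ) (hl : 0 < l) (j : ℕ) (hjl : ((j:ℝ) + 1) ≤ l)
    (ht : (j:ℝ) + 3/4 ≤ G l 0) :
    xinv l ((j:ℝ) + 3/4) + 1/2 + xinv l ((j:ℝ) + 3/4) / (Real.pi * l)
      ≤ ∫ s in ((j:ℝ))..((j:ℝ)+1), xinv l s := by
  have hpi := Real.pi_pos
  set t : ℝ := (j:ℝ) + 3/4 with htdef
  have htpos : 0 < t := by positivity
  have htmem : t ∈ Icc 0 l := ⟨htpos.le, by rw [htdef]; linarith⟩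
  set x : ℝ := xinv l t with hxdef
  have hx0 : 0 ≤ x := xinv_nonneg l t hl htmem ht
  have hxl : x < l := xinv_lt_l l t hl htmem htpos
  have hxmem : x ∈ Icc (-l) l := xinv_mem l t hl htmem
  set c : ℝ := Real.arccos (x / l) / Real.pi with hcdef
  have hcpos : 0 < c := by
    apply div_pos _ hpi
    exact Real.arccos_pos.mpr ((div_lt_one hl).mpr hxl)
  have hGx : G l x = t := G_xinv l t hl htmem
  -- pointwise tangent bound
  have hpoint : ∀ s ∈ Icc ((j:ℝ)) ((j:ℝ)+1), x - (s - t) / c ≤ xinv l s := by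
    intro s hs
    have hsIcc : s ∈ Icc 0 l := ⟨le_trans (Nat.cast_nonneg j) hs.1, le_trans hs.2 hjl⟩
    have hu := G_tangent l x hl hxmem (xinv l s) (xinv_mem l s hl hsIcc)
    rw [hGx, G_xinv l s hl hsIcc, ← hcdef] at hu
    have h' : x - xinv l s ≤ (s - t) / c := by
      rw [le_div_iff₀ hcpos]
      nlinarith
    linarith
  -- integral comparison
  have hintx : IntervalIntegrable (xinv l) volume ((j:ℝ)) ((j:ℝ)+1) := by
    apply AntitoneOn.intervalIntegrable
    apply (xinv_antitoneOn l hl).mono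
    rw [uIcc_of_le (by linarith : ((j:ℝ)) ≤ (j:ℝ)+1)]
    exact Icc_subset_Icc (Nat.cast_nonneg j) hjl
  have hintaff : IntervalIntegrable (fun s => x - (s - t) / c) volume ((j:ℝ)) ((j:ℝ)+1) := by
    apply Continuous.intervalIntegrable
    continuity
  have hmono := intervalIntegral.integral_mono_on (by linarith : ((j:ℝ)) ≤ (j:ℝ)+1)
    hintaff hintx hpoint
  -- compute the affine integral
  have haff : ∫ s in ((j:ℝ))..((j:ℝ)+1), (x - (s - t) / c) = x + 1/(4*c) := by
    have h1 : ∀ s : ℝ, x - (s - t) / c = (x + t/c) - s * (1/c) := by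
      intro s; field_simp; ring
    simp_rw [h1]
    rw [intervalIntegral.integral_sub (intervalIntegrable_const)
      ((by continuity : Continuous fun s : ℝ => s * (1/c)).intervalIntegrable _ _)]
    rw [intervalIntegral.integral_const, intervalIntegral.integral_mul_const,
      integral_id, smul_eq_mul]
    have : ((j:ℝ)+1) - (j:ℝ) = 1 := by ring
    rw [this]
    field_simp
    ring
  -- the constant bound : 1/2 + x/(pi*l) ≤ 1/(4c)
  have hline : Real.arccos (x/l) ≤ Real.pi/2 - x/l :=
    arccos_le_lin (by positivity) (by rw [div_le_one hl]; exact hxl.le)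
  have hcle : c ≤ 1/2 - x/(Real.pi*l) := by
    rw [hcdef, div_le_iff₀ hpi]
    have hxpl : x/(Real.pi*l) * Real.pi = x/l := by field_simp
    nlinarith [hline]
  have hfinal : 1/2 + x/(Real.pi*l) ≤ 1/(4*c) := by
    rw [le_div_iff₀ (by positivity : (0:ℝ) < 4*c)]
    have he0 : 0 ≤ x/(Real.pi*l) := by positivity
    nlinarith [hcle, hcpos, he0]
  calc x + 1/2 + x/(Real.pi*l) ≤ x + 1/(4*c) := by linarith
    _ = ∫ s in ((j:ℝ))..((j:ℝ)+1), (x - (s - t) / c) := haff.symm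
    _ ≤ _ := hmono

lemma l_large (l : ℝ) (hl : 0 < l) (h : (3:ℝ)/4 ≤ G l 0) : 2 < l ∧ l / Real.pi + 1/4 ≤ l := by
  have hpi3 := Real.pi_gt_three
  rw [G_at_zero l hl] at h
  have h34 : 3 * Real.pi / 4 ≤ l := by
    rw [le_div_iff₀ Real.pi_pos] at h
    linarith
  constructor
  · linarith
  · have h1 : l / Real.pi ≤ l / 3 := by
      apply div_le_div_of_nonneg_left hl.le (by norm_num) hpi3.le
    nlinarith

lemma sum_floor_eq (l : ℝ) (hl : 0 < l) :
    ∑ m ∈ Finset.Icc 1 ⌊l⌋₊, ⌊G l (m : ℝ) + 1 / 4⌋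
      = ∑ j ∈ Finset.range (⌊G l 0 + 1/4⌋.toNat), ((⌊xinv l ((j:ℝ) + 3/4)⌋₊ : ℤ)) := by
  have hpi := Real.pi_pos
  set N := ⌊l⌋₊ with hN
  set K := ⌊G l 0 + 1/4⌋ with hKdef
  set Kn := K.toNat with hKn
  have hNl : (N:ℝ) ≤ l := Nat.floor_le hl.le
  have hGanti := (G_strictAntiOn l hl)
  have hmmem : ∀ m ∈ Finset.Icc 1 N, (m:ℝ) ∈ Icc (-l) l := by
    intro m hm
    rw [Finset.mem_Icc] at hm
    constructor
    · have : (1:ℝ) ≤ (m:ℝ) := by exact_mod_cast hm.1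
      linarith
    · calc (m:ℝ) ≤ (N:ℝ) := by exact_mod_cast hm.2
        _ ≤ l := hNl
  have hGm_nonneg : ∀ m ∈ Finset.Icc 1 N, 0 ≤ G l m := fun m hm =>
    G_nonneg l hl _ (hmmem m hm)
  have hGm_le : ∀ m ∈ Finset.Icc 1 N, G l m ≤ G l 0 := by
    intro m hm
    rcases Finset.mem_Icc.mp hm with ⟨h1, _⟩
    apply (hGanti.antitoneOn) (by constructor <;> [linarith; exact hl.le] : (0:ℝ) ∈ Icc (-l) l)
      (hmmem m hm)
    exact_mod_cast Nat.zero_le m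
  -- step 1 : each term is a count over levels
  have E1 : ∀ m ∈ Finset.Icc 1 N, ⌊G l (m:ℝ) + 1/4⌋
      = (((Finset.range Kn).filter (fun j : ℕ => (j:ℝ) + 3/4 ≤ G l (m:ℝ))).card : ℤ) := by
    intro m hm
    have hy0 : (0:ℤ) ≤ ⌊G l (m:ℝ) + 1/4⌋ := by
      apply Int.floor_nonneg.mpr
      have := hGm_nonneg m hm
      linarith
    have hyK : ⌊G l (m:ℝ) + 1/4⌋ ≤ K := Int.floor_le_floor (by linarith [hGm_le m hm])
    have hset : (Finset.range Kn).filter (fun j : ℕ => (j:ℝ) + 3/4 ≤ G l (m:ℝ))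
        = Finset.range (⌊G l (m:ℝ) + 1/4⌋.toNat) := by
      ext j
      simp only [Finset.mem_filter, Finset.mem_range]
      constructor
      · rintro ⟨_, hcond⟩
        have h1 : (((j:ℤ) + 1 : ℤ) : ℝ) ≤ G l (m:ℝ) + 1/4 := by push_cast; linarith
        have h2 := Int.le_floor.mpr h1
        omega
      · intro hj
        have hj' : (j:ℤ) < ⌊G l (m:ℝ) + 1/4⌋ := Int.lt_toNat.mp hj
        constructor
        · have : (j:ℤ) < K := lt_of_lt_of_le hj' hyK
          omega
        · have : ((j:ℤ) + 1 : ℤ) ≤ ⌊G l (m:ℝ) + 1/4⌋ := hj'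
          have := Int.le_floor.mp this
          push_cast at this
          linarith
    rw [hset, Finset.card_range]
    omega
  -- step 2 : swap
  have swap : ∑ m ∈ Finset.Icc 1 N, ⌊G l (m:ℝ) + 1/4⌋
      = ∑ j ∈ Finset.range Kn,
          (((Finset.Icc 1 N).filter (fun m : ℕ => (j:ℝ) + 3/4 ≤ G l (m:ℝ))).card : ℤ) := by
    rw [Finset.sum_congr rfl E1]
    push_cast
    simp_rw [Finset.card_filter]
    push_cast
    rw [Finset.sum_comm]
  rw [swap]
  -- step 3 : per level count equals floor of xinv
  apply Finset.sum_congr rfl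
  intro j hj
  rw [Finset.mem_range] at hj
  have hK1 : 1 ≤ K := by omega
  have hG34 : (3:ℝ)/4 ≤ G l 0 := by
    have := Int.le_floor.mp hK1
    push_cast at this
    linarith
  obtain ⟨hl2, hlK⟩ := l_large l hl hG34
  have hKnl : (Kn:ℝ) ≤ l := by
    have h1 : (Kn:ℤ) ≤ ⌊G l 0 + 1/4⌋ := by omega
    have h2 : ((Kn:ℤ):ℝ) ≤ G l 0 + 1/4 := le_trans (by exact_mod_cast h1) (Int.floor_le _)
    rw [G_at_zero l hl] at h2
    push_cast at h2
    linarith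
  set t : ℝ := (j:ℝ) + 3/4 with htdef
  have htmem : t ∈ Icc 0 l := by
    constructor
    · positivity
    · have : (j:ℝ) + 1 ≤ Kn := by exact_mod_cast hj
      rw [htdef]; linarith
  have htG0 : t ≤ G l 0 := by
    have h1 : ((j:ℝ) + 1) ≤ (Kn:ℝ) := by exact_mod_cast hj
    have h2 : (Kn:ℝ) ≤ G l 0 + 1/4 := by
      have : (Kn:ℤ) ≤ ⌊G l 0 + 1/4⌋ := by omega
      calc (Kn:ℝ) = ((Kn:ℤ):ℝ) := by push_cast; ring
        _ ≤ (⌊G l 0 + 1/4⌋ : ℝ) := by exact_mod_cast this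
        _ ≤ G l 0 + 1/4 := Int.floor_le _
    rw [htdef]; linarith
  set x : ℝ := xinv l t with hxdef
  have hx0 : 0 ≤ x := xinv_nonneg l t hl htmem htG0
  have hxmem : x ∈ Icc (-l) l := xinv_mem l t hl htmem
  have hGx : G l x = t := G_xinv l t hl htmem
  have hcount : (Finset.Icc 1 N).filter (fun m : ℕ => t ≤ G l (m:ℝ)) = Finset.Icc 1 ⌊x⌋₊ := by
    ext m
    simp only [Finset.mem_filter, Finset.mem_Icc]
    constructor
    · rintro ⟨⟨hm1, hmN⟩, hcond⟩
      refine ⟨hm1, ?_⟩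
      rw [Nat.le_floor_iff hx0]
      by_contra hcon
      push_neg at hcon
      have hmem : (m:ℝ) ∈ Icc (-l) l := hmmem m (Finset.mem_Icc.mpr ⟨hm1, hmN⟩)
      have := G_strictAntiOn l hl hxmem hmem hcon
      rw [hGx] at this
      linarith
    · rintro ⟨hm1, hmx⟩
      have hmx' : (m:ℝ) ≤ x := by
        rw [Nat.le_floor_iff hx0] at hmx
        exact hmx
      have hmN : m ≤ N := le_trans hmx (Nat.floor_mono hxmem.2)
      refine ⟨⟨hm1, hmN⟩, ?_⟩
      have hmem : (m:ℝ) ∈ Icc (-l) l := hmmem m (Finset.mem_Icc.mpr ⟨hm1, hmN⟩)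
      have := (hGanti.antitoneOn) hmem hxmem hmx'
      rw [hGx] at this
      linarith
  rw [hcount, Nat.card_Icc]
  simp

theorem stmt17 (l : ℝ) (hl : 0 < l) : (PD2 l : ℝ) < l ^ 2 / 4 := by
  have hpi := Real.pi_pos
  have hpi3 := Real.pi_gt_three
  set K := ⌊G l 0 + 1/4⌋ with hKdef
  set Kn := K.toNat with hKn
  have hG0 : G l 0 = l / Real.pi := G_at_zero l hl
  have hK0 : 0 ≤ K := Int.floor_nonneg.mpr (by rw [hG0]; positivity)
  have hPD2 : PD2 l = K + 2 * ∑ j ∈ Finset.range Kn, ((⌊xinv l ((j:ℝ) + 3/4)⌋₊ : ℤ)) := by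
    rw [PD2, sum_floor_eq l hl]
  rcases Nat.eq_zero_or_pos Kn with hKn0 | hKn1
  · -- K = 0 : PD2 = 0
    have hKz : K = 0 := by omega
    rw [hPD2, hKz, hKn0]
    simp
    positivity
  · -- main case
    have hK1 : 1 ≤ K := by omega
    have hG34 : (3:ℝ)/4 ≤ G l 0 := by
      have h1 := Int.le_floor.mp hK1
      push_cast at h1
      linarith
    obtain ⟨hl2, hlK⟩ := l_large l hl hG34
    have hKnG : (Kn:ℝ) ≤ G l 0 + 1/4 := by
      have h1 : (Kn:ℤ) ≤ K := by omega
      calc (Kn:ℝ) = ((Kn:ℤ):ℝ) := by push_cast; ring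
        _ ≤ (K:ℝ) := by exact_mod_cast h1
        _ ≤ G l 0 + 1/4 := Int.floor_le _
    have hKnl : (Kn:ℝ) ≤ l := by rw [hG0] at hKnG; linarith
    -- facts per j
    have hjfacts : ∀ j, j < Kn → ((j:ℝ) + 1 ≤ l ∧ (j:ℝ) + 3/4 ≤ G l 0) := by
      intro j hj
      have h1 : (j:ℝ) + 1 ≤ (Kn:ℝ) := by exact_mod_cast hj
      exact ⟨by linarith, by linarith⟩
    have hx_nonneg : ∀ j, j < Kn → 0 ≤ xinv l ((j:ℝ) + 3/4) := by
      intro j hj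
      obtain ⟨h1, h2⟩ := hjfacts j hj
      exact xinv_nonneg l _ hl ⟨by positivity, by linarith⟩ h2
    -- integrability on each subinterval
    have hintx : ∀ i : ℕ, i < Kn →
        IntervalIntegrable (xinv l) volume ((i:ℝ)) ((i:ℝ)+1) := by
      intro i hi
      apply AntitoneOn.intervalIntegrable
      apply (xinv_antitoneOn l hl).mono
      rw [uIcc_of_le (by linarith : ((i:ℝ)) ≤ (i:ℝ)+1)]
      exact Icc_subset_Icc (Nat.cast_nonneg i) (hjfacts i hi).1
    -- sum of integrals equals integral over [0, Kn]
    have hsum : ∑ j ∈ Finset.range Kn, (∫ s in ((j:ℝ))..((j:ℝ)+1), xinv l s)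
        = ∫ s in (0:ℝ)..(Kn:ℝ), xinv l s := by
      have h := intervalIntegral.sum_integral_adjacent_intervals
        (a := fun i : ℕ => (i:ℝ)) (n := Kn)
        (fun i hi => by
          have := hintx i hi
          simpa [Nat.cast_succ] using this)
      simpa [Nat.cast_succ] using h
    -- integral comparison with max
    have hmax : (∫ s in (0:ℝ)..(Kn:ℝ), xinv l s)
        ≤ ∫ s in (0:ℝ)..(Kn:ℝ), max (xinv l s) 0 := by
      apply intervalIntegral.integral_mono_on (by positivity : (0:ℝ) ≤ (Kn:ℝ))
      · apply AntitoneOn.intervalIntegrable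
        apply (xinv_antitoneOn l hl).mono
        rw [uIcc_of_le (by positivity : (0:ℝ) ≤ (Kn:ℝ))]
        exact Icc_subset_Icc le_rfl hKnl
      · apply AntitoneOn.intervalIntegrable
        intro a ha b hb hab
        rw [uIcc_of_le (by positivity : (0:ℝ) ≤ (Kn:ℝ))] at ha hb
        have := (xinv_antitoneOn l hl) ⟨ha.1, le_trans ha.2 hKnl⟩ ⟨hb.1, le_trans hb.2 hKnl⟩ hab
        exact max_le_max this le_rfl
      · intro s _
        exact le_max_left _ _
    have hD := integral_xinv_le l (Kn:ℝ) hl (by positivity) hKnl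
    -- lower bound for sum of integrals
    have hA : ∑ j ∈ Finset.range Kn,
        (xinv l ((j:ℝ) + 3/4) + 1/2 + xinv l ((j:ℝ) + 3/4) / (Real.pi * l))
        ≤ ∑ j ∈ Finset.range Kn, (∫ s in ((j:ℝ))..((j:ℝ)+1), xinv l s) := by
      apply Finset.sum_le_sum
      intro j hj
      rw [Finset.mem_range] at hj
      exact interval_bound l hl j (hjfacts j hj).1 (hjfacts j hj).2
    set S := ∑ j ∈ Finset.range Kn, xinv l ((j:ℝ) + 3/4) with hSdef
    have hS0 : 0 ≤ S := Finset.sum_nonneg (fun j hj => hx_nonneg j (Finset.mem_range.mp hj))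
    have hsplit : ∑ j ∈ Finset.range Kn,
        (xinv l ((j:ℝ) + 3/4) + 1/2 + xinv l ((j:ℝ) + 3/4) / (Real.pi * l))
        = S + (Kn:ℝ)/2 + S / (Real.pi * l) := by
      rw [Finset.sum_add_distrib, Finset.sum_add_distrib, Finset.sum_const, Finset.card_range]
      rw [hSdef, ← Finset.sum_div]
      push_cast
      ring
    have hchain : S + (Kn:ℝ)/2 + S / (Real.pi * l) ≤ l^2/8 := by
      rw [← hsplit]
      exact le_trans hA (le_trans (le_of_eq hsum) (le_trans hmax hD))
    -- bound PD2
    have hfloorle : ∀ j ∈ Finset.range Kn, ((⌊xinv l ((j:ℝ) + 3/4)⌋₊ : ℝ))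
        ≤ xinv l ((j:ℝ) + 3/4) := by
      intro j hj
      exact Nat.floor_le (hx_nonneg j (Finset.mem_range.mp hj))
    have hPD2r : (PD2 l : ℝ) ≤ (Kn:ℝ) + 2 * S := by
      rw [hPD2]
      push_cast
      have h1 : ((K:ℤ):ℝ) = (Kn:ℝ) := by
        have h := Int.toNat_of_nonneg hK0
        exact_mod_cast h.symm
      rw [h1]
      have h2 : ∑ j ∈ Finset.range Kn, ((⌊xinv l ((j:ℝ) + 3/4)⌋₊ : ℝ)) ≤ S :=
        Finset.sum_le_sum hfloorle
      linarith
    rcases eq_or_lt_of_le hS0 with hSz | hSpos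
    · -- all xinv are zero; PD2 ≤ Kn < l^2/4
      have hKnle : (Kn:ℝ) ≤ l/Real.pi + 1/4 := by rw [hG0] at hKnG; linarith
      have hlpi : l/Real.pi ≤ l/3 := by
        apply div_le_div_of_nonneg_left hl.le (by norm_num) hpi3.le
      have : (PD2 l : ℝ) ≤ (Kn:ℝ) := by rw [← hSz] at hPD2r; linarith
      have hfin : (Kn:ℝ) < l^2/4 := by
        have : l/Real.pi + 1/4 < l^2/4 := by nlinarith
        linarith
      linarith
    · -- S > 0 gives strict inequality
      have hSpl : 0 < S / (Real.pi * l) := by positivity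
      have : (Kn:ℝ) + 2*S ≤ l^2/4 - 2*(S/(Real.pi * l)) := by linarith
      linarith
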